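/- Let q ≥ 2 be an integer and define the q-th Fuss–Catalan numbers c_N = (1/((q−1)N+1))·binom(qN, N) ∈ ℚ. Then the formal power series C(X) = Σ_{N≥0} c_N X^N ∈ ℚ⟦X⟧ satisfies the algebraic equation C = 1 + X·C^q. -/

import Mathlib

open PowerSeries

noncomputable def fc (q s N : ℕ) : ℚ :=
  (s : ℚ) / ((q*N+s : ℕ) : ℚ) * ((q*N+s).choose N : ℚ)

lemma fc_zero_left (q N : ℕ) : fc q 0 N = 0 := by simp [fc]

lemma fc_zero_right (q s : ℕ) (hs : 1 ≤ s) : fc q s 0 = 1 := by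
  have h : (s:ℚ) ≠ 0 := by exact_mod_cast Nat.one_le_iff_ne_zero.mp hs
  simp [fc, div_mul_cancel₀, h]

lemma fc_key (q : ℕ) (hq : 2 ≤ q) (s N : ℕ) :
    fc q (s+1) (N+1) = fc q s (N+1) + fc q (s+q) N := by
  have e1 : q*(N+1)+(s+1) = (q*N+q+s)+1 := by ring
  have e2 : q*(N+1)+s = q*N+q+s := by ring
  have e3 : q*N+(s+q) = q*N+q+s := by ring
  have hm0 : q*N+q+s ≠ 0 := by omega
  have hNle : N ≤ q*N+q+s := by
    have : N ≤ q*N := Nat.le_mul_of_pos_left N (by omega)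
    omega
  unfold fc
  rw [e1, e2, e3, Nat.choose_succ_succ]
  set A : ℚ := ((q*N+q+s).choose (N+1) : ℚ) with hA
  set B : ℚ := ((q*N+q+s).choose N : ℚ) with hB
  have h1 : A * (N+1) = B * ((q:ℚ)*N+q+s - N) := by
    have h := congrArg (fun t : ℕ => (t : ℚ)) (Nat.choose_succ_right_eq (q*N+q+s) N)
    push_cast [Nat.cast_sub hNle] at h
    rw [hA, hB]
    linarith
  have hm0Q : ((q*N+q+s : ℕ) : ℚ) ≠ 0 := by exact_mod_cast hm0
  have hm1Q : (((q*N+q+s)+1 : ℕ) : ℚ) ≠ 0 := by positivity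
  push_cast at hm0Q hm1Q ⊢
  field_simp
  linear_combination (q:ℚ) * h1

lemma fc_conv (q : ℕ) (hq : 2 ≤ q) :
    ∀ N, ∀ s, 1 ≤ s →
      (∑ i ∈ Finset.range (N+1), fc q 1 i * fc q s (N-i)) = fc q (s+1) N := by
  intro N
  induction N using Nat.strong_induction_on with
  | _ N ihN =>
    rcases N with _ | M
    · intro s hs
      simp [fc_zero_right q _ hs, fc_zero_right q 1 le_rfl,
        fc_zero_right q (s+1) (by omega)]
    · intro s
      induction s with
      | zero => omega
      | succ s ihs =>
        intro _
        rw [Finset.sum_range_succ, Nat.sub_self, fc_zero_right q (s+1) (by omega), mul_one]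
        have hsum : ∑ i ∈ Finset.range (M+1), fc q 1 i * fc q (s+1) (M+1-i)
            = (∑ i ∈ Finset.range (M+1), fc q 1 i * fc q s (M+1-i))
              + (∑ i ∈ Finset.range (M+1), fc q 1 i * fc q (s+q) (M-i)) := by
          rw [← Finset.sum_add_distrib]
          refine Finset.sum_congr rfl ?_
          intro i hi
          have hi' : i ≤ M := by
            have := Finset.mem_range.mp hi; omega
          have e : M+1-i = (M-i)+1 := by omega
          rw [e, fc_key q hq s (M-i), ← e, mul_add]
        rw [hsum]
        have h2 : (∑ i ∈ Finset.range (M+1), fc q 1 i * fc q (s+q) (M-i))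
            = fc q (s+q+1) M := ihN M (by omega) (s+q) (by omega)
        rw [h2]
        rcases Nat.eq_zero_or_pos s with hs0 | hs1
        · subst hs0
          have : ∀ i ∈ Finset.range (M+1), fc q 1 i * fc q 0 (M+1-i) = 0 := by
            intro i _; rw [fc_zero_left, mul_zero]
          rw [Finset.sum_congr rfl this, Finset.sum_const_zero]
          have := fc_key q hq 1 M
          simpa [add_comm] using this.symm
        · have hstep : (∑ i ∈ Finset.range (M+1), fc q 1 i * fc q s (M+1-i)) + fc q 1 (M+1)
              = fc q (s+1) (M+1) := by
            have := ihs hs1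
            rw [Finset.sum_range_succ, Nat.sub_self, fc_zero_right q s hs1, mul_one] at this
            exact this
          have hk := fc_key q hq (s+1) M
          calc (∑ i ∈ Finset.range (M+1), fc q 1 i * fc q s (M+1-i))
                + fc q (s+q+1) M + fc q 1 (M+1)
              = ((∑ i ∈ Finset.range (M+1), fc q 1 i * fc q s (M+1-i)) + fc q 1 (M+1))
                + fc q (s+q+1) M := by ring
            _ = fc q (s+1) (M+1) + fc q (s+q+1) M := by rw [hstep]
            _ = fc q (s+1+1) (M+1) := by
                have e : s+1+q = s+q+1 := by ring
                rw [hk, e]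

lemma fc_mk_pow (q : ℕ) (hq : 2 ≤ q) :
    ∀ s, 1 ≤ s → (PowerSeries.mk (fc q 1) : ℚ⟦X⟧)^s = PowerSeries.mk (fc q s) := by
  intro s
  induction s with
  | zero => omega
  | succ s ihs =>
    intro _
    rcases Nat.eq_zero_or_pos s with hs0 | hs1
    · subst hs0; rw [pow_one]
    · rw [pow_succ, ihs hs1, mul_comm]
      ext n
      rw [PowerSeries.coeff_mul, Finset.Nat.sum_antidiagonal_eq_sum_range_succ_mk]
      simp only [coeff_mk]
      exact fc_conv q hq n s hs1

lemma c_eq_fc (q : ℕ) (hq : 2 ≤ q) (N : ℕ) :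
    (1 / (((q : ℚ) - 1) * N + 1)) * (Nat.choose (q * N) N : ℚ) = fc q 1 N := by
  rcases N with _ | k
  · simp [fc]
  · have e : q*(k+1) = q*k+q := by ring
    have e1 : q*(k+1)+1 = (q*k+q)+1 := by ring
    have hkle : k ≤ q*k+q := by
      have : k ≤ q*k := Nat.le_mul_of_pos_left k (by omega)
      omega
    unfold fc
    rw [e1, e, Nat.choose_succ_succ]
    set A : ℚ := ((q*k+q).choose (k+1) : ℚ) with hA
    set B : ℚ := ((q*k+q).choose k : ℚ) with hB
    have h1 : A * (k+1) = B * ((q:ℚ)*k+q - k) := by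
      have h := congrArg (fun t : ℕ => (t : ℚ)) (Nat.choose_succ_right_eq (q*k+q) k)
      push_cast [Nat.cast_sub hkle] at h
      rw [hA, hB]
      linarith
    have hq2 : (2:ℚ) ≤ (q:ℚ) := by exact_mod_cast hq
    have hk0 : (0:ℚ) ≤ (k:ℚ) := Nat.cast_nonneg k
    have hd1 : ((q:ℚ) - 1) * (↑(k+1)) + 1 ≠ 0 := by
      have : (0:ℚ) < ((q:ℚ) - 1) * (↑(k+1)) + 1 := by push_cast; nlinarith
      exact ne_of_gt this
    have hd2 : (((q*k+q)+1 : ℕ) : ℚ) ≠ 0 := by positivity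
    push_cast at hd1 hd2 ⊢
    field_simp
    linear_combination h1

theorem fuss_catalan_generating_function (q : ℕ) (hq : 2 ≤ q) (c : ℕ → ℚ)
    (hc : ∀ N : ℕ, c N = (1 / (((q : ℚ) - 1) * N + 1)) * (Nat.choose (q * N) N : ℚ)) :
    PowerSeries.mk c = 1 + PowerSeries.X * (PowerSeries.mk c) ^ q := by
  have hC : PowerSeries.mk c = PowerSeries.mk (fc q 1) := by
    ext n
    rw [coeff_mk, coeff_mk, hc n, c_eq_fc q hq n]
  rw [hC, fc_mk_pow q hq q (by omega)]
  ext n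
  rcases n with _ | N
  · simp [coeff_mk, fc_zero_right q 1 le_rfl]
  · rw [map_add, PowerSeries.coeff_succ_X_mul, coeff_mk, coeff_mk]
    have h0 : (PowerSeries.coeff (R := ℚ) (N+1)) (1 : ℚ⟦X⟧) = 0 := by
      simp
    rw [h0, zero_add]
    simpa [fc_zero_left] using fc_key q hq 0 N
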